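/- In the ring of formal power series in z with coefficients in ℤ[x], the following two identities hold: (1 − (1+x+x²)z + x²z²) · ∑_{m≥0} A_m(x) z^m = 1 − x z², and (1 − (1+x+x²)z + x²z²) · ( ∑_{m≥0} B_m(x) z^m − x ) = 1 + x³ z. -/

import Mathlib

open Polynomial

/-- The rank generating function polynomials `A m` of the matchable Lucas cubes `Ω_{2m}`. -/
noncomputable def A : ℕ → Polynomial ℤ
  | 0 => 1
  | 1 => 1 + X + X ^ 2
  | 2 => 1 + X + 2 * X ^ 2 + 2 * X ^ 3 + X ^ 4
  | (m + 3) => (1 + X + X ^ 2) * A (m + 2) - X ^ 2 * A (m + 1)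

/-- The rank generating function polynomials `B m` of the matchable Lucas cubes `Ω_{2m+1}`. -/
noncomputable def B : ℕ → Polynomial ℤ
  | 0 => 1 + X
  | 1 => 1 + X + X ^ 2 + X ^ 3
  | 2 => 1 + 2 * X + 2 * X ^ 2 + 3 * X ^ 3 + 2 * X ^ 4 + X ^ 5
  | (m + 3) => (1 + X + X ^ 2) * B (m + 2) - X ^ 2 * B (m + 1)

lemma key (p q : Polynomial ℤ) (f : PowerSeries (Polynomial ℤ)) (n : ℕ) :
    PowerSeries.coeff (n+2) ((1 - PowerSeries.C p * PowerSeries.X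
      + PowerSeries.C q * PowerSeries.X ^ 2) * f)
    = PowerSeries.coeff (n+2) f - p * PowerSeries.coeff (n+1) f
      + q * PowerSeries.coeff n f := by
  have h : (1 - PowerSeries.C (R := Polynomial ℤ) p * PowerSeries.X
      + PowerSeries.C q * PowerSeries.X ^ 2) * f
      = f - PowerSeries.C p * (PowerSeries.X * f)
        + PowerSeries.C q * (PowerSeries.X ^ 2 * f) := by ring
  rw [h, map_add, map_sub, PowerSeries.coeff_C_mul, PowerSeries.coeff_C_mul,
    PowerSeries.coeff_succ_X_mul, PowerSeries.coeff_X_pow_mul]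

lemma key1 (p q : Polynomial ℤ) (f : PowerSeries (Polynomial ℤ)) :
    PowerSeries.coeff 1 ((1 - PowerSeries.C p * PowerSeries.X
      + PowerSeries.C q * PowerSeries.X ^ 2) * f)
    = PowerSeries.coeff 1 f - p * PowerSeries.coeff 0 f := by
  have h : (1 - PowerSeries.C (R := Polynomial ℤ) p * PowerSeries.X
      + PowerSeries.C q * PowerSeries.X ^ 2) * f
      = f - PowerSeries.C p * (PowerSeries.X * f)
        + PowerSeries.C q * ((PowerSeries.X ^ 2 * f)) := by ring
  rw [h, map_add, map_sub, PowerSeries.coeff_C_mul, PowerSeries.coeff_C_mul]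
  rw [show (1:ℕ) = 0 + 1 from rfl, PowerSeries.coeff_succ_X_mul]
  have : PowerSeries.coeff (R := Polynomial ℤ) (0+1) (PowerSeries.X ^ 2 * f) = 0 := by
    rw [mul_comm, PowerSeries.coeff_mul_X_pow']
    simp
  rw [this]; ring

lemma key0 (p q : Polynomial ℤ) (f : PowerSeries (Polynomial ℤ)) :
    PowerSeries.coeff 0 ((1 - PowerSeries.C p * PowerSeries.X
      + PowerSeries.C q * PowerSeries.X ^ 2) * f)
    = PowerSeries.coeff 0 f := by
  have h : (1 - PowerSeries.C (R := Polynomial ℤ) p * PowerSeries.X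
      + PowerSeries.C q * PowerSeries.X ^ 2) * f
      = f - PowerSeries.C p * (f * PowerSeries.X ^ 1)
        + PowerSeries.C q * ((f * PowerSeries.X ^ 2)) := by ring
  rw [h, map_add, map_sub, PowerSeries.coeff_C_mul, PowerSeries.coeff_C_mul,
    PowerSeries.coeff_mul_X_pow', PowerSeries.coeff_mul_X_pow']
  simp

theorem generating_functions_of_A_and_B :
    (1 - PowerSeries.C (R := Polynomial ℤ) (1 + X + X ^ 2) * PowerSeries.X
        + PowerSeries.C (R := Polynomial ℤ) (X ^ 2) * PowerSeries.X ^ 2) * PowerSeries.mk A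
      = 1 - PowerSeries.C (R := Polynomial ℤ) X * PowerSeries.X ^ 2 ∧
    (1 - PowerSeries.C (R := Polynomial ℤ) (1 + X + X ^ 2) * PowerSeries.X
        + PowerSeries.C (R := Polynomial ℤ) (X ^ 2) * PowerSeries.X ^ 2)
        * (PowerSeries.mk B - PowerSeries.C (R := Polynomial ℤ) X)
      = 1 + PowerSeries.C (R := Polynomial ℤ) (X ^ 3) * PowerSeries.X := by
  have hC3 : ∀ k : ℕ, PowerSeries.coeff (R := Polynomial ℤ) k (PowerSeries.C (R := Polynomial ℤ) X ^ 3)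
      = if k = 0 then X ^ 3 else 0 := by
    intro k; rw [← map_pow, PowerSeries.coeff_C]
  constructor
  · refine PowerSeries.ext fun n => ?_
    match n with
    | 0 => rw [key0]; simp [A]
    | 1 => rw [key1]; simp [A, PowerSeries.coeff_C_mul, PowerSeries.coeff_X_pow] <;> ring
    | 2 => rw [key]; simp [A, PowerSeries.coeff_C_mul, PowerSeries.coeff_X_pow] <;> ring
    | (m+3) => rw [key]; simp [A, PowerSeries.coeff_C_mul, PowerSeries.coeff_X_pow] <;> ring
  · refine PowerSeries.ext fun n => ?_
    match n with
    | 0 => rw [key0]; simp [B]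
    | 1 => rw [key1]; simp [B, hC3, PowerSeries.coeff_C_mul, PowerSeries.coeff_X] <;> ring
    | 2 => rw [key]; simp [B, hC3, PowerSeries.coeff_C_mul, PowerSeries.coeff_X] <;> ring
    | (m+3) => rw [key]; simp [B, hC3, PowerSeries.coeff_C_mul, PowerSeries.coeff_X] <;> ring
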